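/- Let p be a prime, n, m ≥ 2 integers, K a finite extension of ℚ_p containing a primitive n-th root of unity ζ_n and a primitive m-th root of unity ζ_m, π ∈ O_K a uniformizer, and r ≥ 1 an integer. Let A_r = [[ζ_n·π^r, 0], [ζ_n − 1, π^r]] and B_r = [[ζ_m, −(ζ_m − 1)·π^{−r}], [0, 1]] in GL(2,K). Then [A_r] has order exactly n in PGL(2,K), and its fixed points in P¹(K) are exactly [0:1] and [π^r : 1]; and [B_r] has order exactly m in PGL(2,K), and its fixed points in P¹(K) are exactly [π^{−r} : 1] and [1:0]. -/

import Mathlib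

open Matrix

abbrev GL2 (F : Type) [Field F] : Type := Matrix.GeneralLinearGroup (Fin 2) F

abbrev PGL2 (F : Type) [Field F] : Type := GL2 F ⧸ Subgroup.center (GL2 F)

def PGLmk (F : Type) [Field F] : GL2 F →* PGL2 F := QuotientGroup.mk' _

/-- The matrix `A_r = [[ζ·π^r, 0], [ζ − 1, π^r]]` as an element of `GL(2,K)`. -/
noncomputable def matA (K : Type) [Field K] (ζ π : K) (r : ℕ) (hζ : ζ ≠ 0) (hπ : π ≠ 0) :
    GL2 K :=
  Matrix.GeneralLinearGroup.mkOfDetNeZero !![ζ * π ^ r, 0; ζ - 1, π ^ r]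
    (by
      have h : (!![ζ * π ^ r, 0; ζ - 1, π ^ r] : Matrix (Fin 2) (Fin 2) K).det
          = ζ * π ^ r * π ^ r := by
        simp [Matrix.det_fin_two_of]
      rw [h]
      exact mul_ne_zero (mul_ne_zero hζ (pow_ne_zero _ hπ)) (pow_ne_zero _ hπ))

/-- The matrix `B_r = [[ζ, −(ζ − 1)·π^(−r)], [0, 1]]` as an element of `GL(2,K)`. -/
noncomputable def matB (K : Type) [Field K] (ζ π : K) (r : ℕ) (hζ : ζ ≠ 0) : GL2 K :=
  Matrix.GeneralLinearGroup.mkOfDetNeZero !![ζ, -(ζ - 1) * π ^ (-(r : ℤ)); 0, 1]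
    (by
      have h : (!![ζ, -(ζ - 1) * π ^ (-(r : ℤ)); 0, 1] : Matrix (Fin 2) (Fin 2) K).det = ζ := by
        simp [Matrix.det_fin_two_of]
      rw [h]
      exact hζ)

/-- The action of `GL(2,F)` on the projective line `P¹(F)`. -/
noncomputable def projAct {F : Type} [Field F] (A : GL2 F) :
    Projectivization F (Fin 2 → F) → Projectivization F (Fin 2 → F) :=
  Projectivization.map ((Matrix.GeneralLinearGroup.toLin A).toLinearEquiv :
      (Fin 2 → F) →ₗ[F] (Fin 2 → F))
    (Matrix.GeneralLinearGroup.toLin A).toLinearEquiv.injective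

/-- `x ∈ P¹(F)` is a fixed point of the element `g` of `PGL(2,F)`. -/
def FixedPt {F : Type} [Field F] (g : PGL2 F) (x : Projectivization F (Fin 2 → F)) : Prop :=
  ∀ A : GL2 F, PGLmk F A = g → projAct A x = x

/-- The point `[a : 1]` of `P¹(F)`. -/
def Pt (F : Type) [Field F] (a : F) : Projectivization F (Fin 2 → F) :=
  Projectivization.mk F ![a, 1] (by intro h; simpa using congrFun h 1)

/-- The point `[1 : 0] = ∞` of `P¹(F)`. -/
def Pinf (F : Type) [Field F] : Projectivization F (Fin 2 → F) :=
  Projectivization.mk F ![1, 0] (by intro h; simpa using congrFun h 0)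

variable {F : Type} [Field F]

lemma pow_lower (a c d : F) (k : ℕ) : ∃ t : F,
    (!![a, 0; c, d] : Matrix (Fin 2) (Fin 2) F) ^ k = !![a ^ k, 0; t, d ^ k] ∧
      (a - d) * t = c * (a ^ k - d ^ k) := by
  induction k with
  | zero => exact ⟨0, by simp [Matrix.one_fin_two], by ring⟩
  | succ k ih =>
    obtain ⟨t, h1, h2⟩ := ih
    refine ⟨t * a + c * d ^ k, ?_, by ring_nf; linear_combination a * h2⟩
    rw [pow_succ, h1, Matrix.mul_fin_two]
    congr 1 <;> ring_nf

lemma pow_upper (a b : F) (k : ℕ) : ∃ t : F,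
    (!![a, b; 0, 1] : Matrix (Fin 2) (Fin 2) F) ^ k = !![a ^ k, t; 0, 1] ∧
      (a - 1) * t = b * (a ^ k - 1) := by
  induction k with
  | zero => exact ⟨0, by simp [Matrix.one_fin_two], by ring⟩
  | succ k ih =>
    obtain ⟨t, h1, h2⟩ := ih
    refine ⟨a ^ k * b + t, ?_, by ring_nf; linear_combination h2⟩
    rw [pow_succ, h1, Matrix.mul_fin_two]
    congr 1 <;> ring_nf

lemma smul_one_mem_center (c : F) (z : GL2 F) (hz : (z : Matrix (Fin 2) (Fin 2) F) = c • 1) :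
    z ∈ Subgroup.center (GL2 F) := by
  rw [Subgroup.mem_center_iff]
  intro g
  ext i j
  show ((g * z : GL2 F) : Matrix (Fin 2) (Fin 2) F) i j = ((z * g : GL2 F) : Matrix (Fin 2) (Fin 2) F) i j
  rw [Units.val_mul, Units.val_mul, hz, smul_mul_assoc, mul_smul_comm, one_mul, mul_one]

lemma center_scalar (z : GL2 F) (hz : z ∈ Subgroup.center (GL2 F)) :
    ∃ c : F, c ≠ 0 ∧ (z : Matrix (Fin 2) (Fin 2) F) = c • 1 := by
  have hU : (!![1, 1; 0, 1] : Matrix (Fin 2) (Fin 2) F).det ≠ 0 := by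
    simp [Matrix.det_fin_two_of]
  have hL : (!![1, 0; 1, 1] : Matrix (Fin 2) (Fin 2) F).det ≠ 0 := by
    simp [Matrix.det_fin_two_of]
  set U : GL2 F := Matrix.GeneralLinearGroup.mkOfDetNeZero _ hU with hUdef
  set L : GL2 F := Matrix.GeneralLinearGroup.mkOfDetNeZero _ hL with hLdef
  have hcU := congrArg Units.val (Subgroup.mem_center_iff.mp hz U)
  have hcL := congrArg Units.val (Subgroup.mem_center_iff.mp hz L)
  rw [Units.val_mul, Units.val_mul] at hcU hcL
  have hUv : (U : Matrix (Fin 2) (Fin 2) F) = !![1, 1; 0, 1] := rfl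
  have hLv : (L : Matrix (Fin 2) (Fin 2) F) = !![1, 0; 1, 1] := rfl
  set M := (z : Matrix (Fin 2) (Fin 2) F) with hM
  have hMe : M = !![M 0 0, M 0 1; M 1 0, M 1 1] := by
    exact Matrix.etaExpand_eq M |>.symm
  rw [hUv, hMe] at hcU
  rw [hLv, hMe] at hcL
  rw [Matrix.mul_fin_two, Matrix.mul_fin_two] at hcU hcL
  have e1 : M 1 0 = 0 := by
    have := congrFun (congrFun hcU 0) 0
    simp at this
    linear_combination this
  have e2 : M 0 1 = 0 := by
    have := congrFun (congrFun hcL 0) 0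
    simpa using this
  have e3 : M 0 0 = M 1 1 := by
    have := congrFun (congrFun hcU 0) 1
    simp at this
    linear_combination - this
  refine ⟨M 0 0, ?_, ?_⟩
  · intro h0
    have : M * ((z⁻¹ : GL2 F) : Matrix (Fin 2) (Fin 2) F) = 1 := z.mul_inv
    rw [hMe, e1, e2, h0, ← e3, h0] at this
    have h00 := congrFun (congrFun this 0) 0
    have : (0 : F) = 1 := by
      simpa [Matrix.mul_apply, Fin.sum_univ_two] using h00
    exact zero_ne_one this
  · rw [hMe, e1, e2, ← e3]
    ext i j
    fin_cases i <;> fin_cases j <;> simp [Matrix.one_fin_two]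
lemma mulVec_ne_zero (A : GL2 F) (v : Fin 2 → F) (hv : v ≠ 0) :
    (A : Matrix (Fin 2) (Fin 2) F) *ᵥ v ≠ 0 := by
  intro h
  apply hv
  have hdet : IsUnit (A : Matrix (Fin 2) (Fin 2) F).det :=
    (Matrix.isUnit_iff_isUnit_det _).1 A.isUnit
  have := congrArg (fun w => (A : Matrix (Fin 2) (Fin 2) F)⁻¹ *ᵥ w) h
  simpa only [Matrix.mulVec_mulVec, Matrix.nonsing_inv_mul _ hdet, Matrix.one_mulVec,
    Matrix.mulVec_zero] using this

lemma projAct_mk (A : GL2 F) (v : Fin 2 → F) (hv : v ≠ 0) :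
    projAct A (Projectivization.mk F v hv) =
      Projectivization.mk F ((A : Matrix (Fin 2) (Fin 2) F) *ᵥ v) (mulVec_ne_zero A v hv) := by
  unfold projAct
  rw [Projectivization.map_mk]
  congr 1

lemma fixedPt_iff (A : GL2 F) (x : Projectivization F (Fin 2 → F)) :
    FixedPt (PGLmk F A) x ↔ projAct A x = x := by
  constructor
  · intro h; exact h A rfl
  · intro h C hC
    obtain ⟨z, hzN, hCz⟩ := (QuotientGroup.mk'_eq_mk' _).mp hC
    obtain ⟨c, hc0, hcs⟩ := center_scalar z hzN
    have hval : (A : Matrix (Fin 2) (Fin 2) F) = c • (C : Matrix (Fin 2) (Fin 2) F) := by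
      rw [← hCz, Units.val_mul, hcs, mul_smul_comm, mul_one]
    have hCA : projAct C x = projAct A x := by
      induction x using Projectivization.ind with
      | h v hv =>
        rw [projAct_mk, projAct_mk, Projectivization.mk_eq_mk_iff']
        refine ⟨c⁻¹, ?_⟩
        rw [hval, Matrix.smul_mulVec, smul_smul, inv_mul_cancel₀ hc0, one_smul]
    rw [hCA, h]

lemma mk_eq_Pt_iff (v : Fin 2 → F) (hv : v ≠ 0) (t : F) :
    Projectivization.mk F v hv = Pt F t ↔ v 1 ≠ 0 ∧ v 0 = t * v 1 := by
  rw [Pt, Projectivization.mk_eq_mk_iff']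
  constructor
  · rintro ⟨a, ha⟩
    have h0 := congrFun ha 0
    have h1 := congrFun ha 1
    simp at h0 h1
    have ha0 : a ≠ 0 := by
      rintro rfl
      apply hv
      funext i; fin_cases i <;> simp [← h0, ← h1]
    refine ⟨by rw [← h1]; simpa using ha0, by rw [← h0, ← h1]; ring⟩
  · rintro ⟨h1, h0⟩
    refine ⟨v 1, ?_⟩
    funext i; fin_cases i <;> simp [h0] <;> ring

lemma mk_eq_Pinf_iff (v : Fin 2 → F) (hv : v ≠ 0) :
    Projectivization.mk F v hv = Pinf F ↔ v 1 = 0 := by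
  rw [Pinf, Projectivization.mk_eq_mk_iff']
  constructor
  · rintro ⟨a, ha⟩
    have h1 := congrFun ha 1
    simpa using h1.symm
  · intro h1
    have h0 : v 0 ≠ 0 := by
      intro h0; apply hv; funext i; fin_cases i <;> simp [h0, h1]
    refine ⟨v 0, ?_⟩
    funext i; fin_cases i <;> simp [h1]

lemma partA (K : Type) [Field K] (n : ℕ) (hn : 2 ≤ n) (ζ π : K)
    (hζ : IsPrimitiveRoot ζ n) (hπ0 : π ≠ 0) (r : ℕ) (h0 : ζ ≠ 0) :
    orderOf (PGLmk K (matA K ζ π r h0 hπ0)) = n ∧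
      ∀ x : Projectivization K (Fin 2 → K),
        FixedPt (PGLmk K (matA K ζ π r h0 hπ0)) x ↔ x = Pt K 0 ∨ x = Pt K (π ^ r) := by
  set A := matA K ζ π r h0 hπ0 with hA
  have hζ1 : ζ - 1 ≠ 0 := sub_ne_zero.mpr (hζ.ne_one (by omega))
  have hπr : (π : K) ^ r ≠ 0 := pow_ne_zero _ hπ0
  have hAval : (A : Matrix (Fin 2) (Fin 2) K) = !![ζ * π ^ r, 0; ζ - 1, π ^ r] := rfl
  constructor
  · -- order
    have key : ∀ k : ℕ, (PGLmk K A) ^ k = 1 ↔ ζ ^ k = 1 := by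
      intro k
      rw [← map_pow]
      have hq : PGLmk K (A ^ k) = 1 ↔ (A ^ k) ∈ Subgroup.center (GL2 K) :=
        QuotientGroup.eq_one_iff _
      rw [hq]
      obtain ⟨t, h1, h2⟩ := pow_lower (ζ * π ^ r) (ζ - 1) (π ^ r) k
      have hpk : ((A ^ k : GL2 K) : Matrix (Fin 2) (Fin 2) K)
          = !![(ζ * π ^ r) ^ k, 0; t, (π ^ r) ^ k] := by
        rw [Units.val_pow_eq_pow_val, hAval, h1]
      constructor
      · intro hc
        obtain ⟨c0, hc0, hcs⟩ := center_scalar _ hc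
        rw [hpk] at hcs
        have e00 := congrFun (congrFun hcs 0) 0
        have e11 := congrFun (congrFun hcs 1) 1
        simp [Matrix.one_apply] at e00 e11
        have : ζ ^ k * (π ^ r) ^ k = (π ^ r) ^ k := by
          rw [← mul_pow]; rw [e00, e11]
        exact mul_right_cancel₀ (pow_ne_zero _ hπr) (by rw [this, one_mul])
      · intro hk
        have hak : (ζ * π ^ r) ^ k = (π ^ r) ^ k := by rw [mul_pow, hk, one_mul]
        have ht : t = 0 := by
          have : (ζ * π ^ r - π ^ r) * t = 0 := by rw [h2, hak, sub_self, mul_zero]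
          have hne : ζ * π ^ r - π ^ r ≠ 0 := by
            have : ζ * π ^ r - π ^ r = (ζ - 1) * π ^ r := by ring
            rw [this]; exact mul_ne_zero hζ1 hπr
          exact (mul_eq_zero.mp this).resolve_left hne
        apply smul_one_mem_center ((π ^ r) ^ k)
        rw [hpk, ht, hak]
        ext i j
        fin_cases i <;> fin_cases j <;> simp [Matrix.one_apply]
    refine Nat.dvd_antisymm (orderOf_dvd_of_pow_eq_one ((key n).2 hζ.pow_eq_one)) ?_
    exact (hζ.pow_eq_one_iff_dvd _).1 ((key _).1 (pow_orderOf_eq_one _))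
  · -- fixed points
    intro x
    rw [fixedPt_iff]
    induction x using Projectivization.ind with
    | h v hv =>
      have hmv : (A : Matrix (Fin 2) (Fin 2) K) *ᵥ v
          = ![ζ * π ^ r * v 0, (ζ - 1) * v 0 + π ^ r * v 1] := by
        funext i
        fin_cases i <;>
          simp [hAval, Matrix.mulVec, dotProduct, Fin.sum_univ_two,
            Matrix.vecHead, Matrix.vecTail]
      rw [projAct_mk, Projectivization.mk_eq_mk_iff', mk_eq_Pt_iff, mk_eq_Pt_iff, hmv]
      constructor
      · rintro ⟨u, hu⟩
        have h0 := congrFun hu 0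
        have h1 := congrFun hu 1
        simp only [Pi.smul_apply, smul_eq_mul, Matrix.cons_val_zero, Matrix.cons_val_one,
          Matrix.head_cons] at h0 h1
        by_cases hv0 : v 0 = 0
        · left
          refine ⟨?_, by rw [hv0]; ring⟩
          intro hv1
          apply hv; funext i; fin_cases i <;> simp [hv0, hv1]
        · right
          have hu' : u = ζ * π ^ r := mul_right_cancel₀ hv0 h0
          have hmain : (ζ - 1) * v 0 = (ζ - 1) * (π ^ r * v 1) := by
            rw [hu'] at h1
            linear_combination -h1
          have hv01 : v 0 = π ^ r * v 1 := mul_left_cancel₀ hζ1 hmain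
          have hv1 : v 1 ≠ 0 := by
            intro hv1
            apply hv0
            rw [hv01, hv1, mul_zero]
          exact ⟨hv1, hv01⟩
      · rintro (⟨hv1, hv0⟩ | ⟨hv1, hv0⟩)
        · refine ⟨π ^ r, ?_⟩
          funext i
          fin_cases i
          · simp only [Fin.zero_eta, Fin.mk_one, Pi.smul_apply, smul_eq_mul, Matrix.cons_val_zero]
            linear_combination (π ^ r - ζ * π ^ r) * hv0
          · simp only [Fin.zero_eta, Fin.mk_one, Pi.smul_apply, smul_eq_mul, Matrix.cons_val_one, Matrix.head_cons, Matrix.cons_val_zero]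
            linear_combination (-(ζ - 1)) * hv0
        · refine ⟨ζ * π ^ r, ?_⟩
          funext i
          fin_cases i
          · simp only [Fin.zero_eta, Fin.mk_one, Pi.smul_apply, smul_eq_mul, Matrix.cons_val_zero]
          · simp only [Fin.zero_eta, Fin.mk_one, Pi.smul_apply, smul_eq_mul, Matrix.cons_val_one, Matrix.head_cons, Matrix.cons_val_zero]
            linear_combination (-(ζ - 1)) * hv0

lemma partB (K : Type) [Field K] (m : ℕ) (hm : 2 ≤ m) (ζ π : K)
    (hζ : IsPrimitiveRoot ζ m) (hπ0 : π ≠ 0) (r : ℕ) (h0 : ζ ≠ 0) :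
    orderOf (PGLmk K (matB K ζ π r h0)) = m ∧
      ∀ x : Projectivization K (Fin 2 → K),
        FixedPt (PGLmk K (matB K ζ π r h0)) x ↔
          x = Pt K (π ^ (-(r : ℤ))) ∨ x = Pinf K := by
  set B := matB K ζ π r h0 with hB
  set b : K := -(ζ - 1) * π ^ (-(r : ℤ)) with hb
  have hζ1 : ζ - 1 ≠ 0 := sub_ne_zero.mpr (hζ.ne_one (by omega))
  have hBval : (B : Matrix (Fin 2) (Fin 2) K) = !![ζ, b; 0, 1] := rfl
  constructor
  · have key : ∀ k : ℕ, (PGLmk K B) ^ k = 1 ↔ ζ ^ k = 1 := by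
      intro k
      rw [← map_pow]
      have hq : PGLmk K (B ^ k) = 1 ↔ (B ^ k) ∈ Subgroup.center (GL2 K) :=
        QuotientGroup.eq_one_iff _
      rw [hq]
      obtain ⟨t, h1, h2⟩ := pow_upper ζ b k
      have hpk : ((B ^ k : GL2 K) : Matrix (Fin 2) (Fin 2) K) = !![ζ ^ k, t; 0, 1] := by
        rw [Units.val_pow_eq_pow_val, hBval, h1]
      constructor
      · intro hc
        obtain ⟨c0, hc0, hcs⟩ := center_scalar _ hc
        rw [hpk] at hcs
        have e00 := congrFun (congrFun hcs 0) 0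
        have e11 := congrFun (congrFun hcs 1) 1
        simp [Matrix.one_apply] at e00 e11
        rw [e00, ← e11]
      · intro hk
        have ht : t = 0 := by
          have : (ζ - 1) * t = 0 := by rw [h2, hk, sub_self, mul_zero]
          exact (mul_eq_zero.mp this).resolve_left hζ1
        apply smul_one_mem_center 1
        rw [hpk, ht, hk]
        ext i j
        fin_cases i <;> fin_cases j <;> simp [Matrix.one_apply]
    refine Nat.dvd_antisymm (orderOf_dvd_of_pow_eq_one ((key m).2 hζ.pow_eq_one)) ?_
    exact (hζ.pow_eq_one_iff_dvd _).1 ((key _).1 (pow_orderOf_eq_one _))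
  · intro x
    rw [fixedPt_iff]
    induction x using Projectivization.ind with
    | h v hv =>
      have hmv : (B : Matrix (Fin 2) (Fin 2) K) *ᵥ v = ![ζ * v 0 + b * v 1, v 1] := by
        funext i
        fin_cases i <;>
          simp [hBval, Matrix.mulVec, dotProduct, Fin.sum_univ_two,
            Matrix.vecHead, Matrix.vecTail]
      rw [projAct_mk, Projectivization.mk_eq_mk_iff', mk_eq_Pt_iff, mk_eq_Pinf_iff, hmv]
      constructor
      · rintro ⟨u, hu⟩
        have h0c := congrFun hu 0
        have h1c := congrFun hu 1
        simp only [Pi.smul_apply, smul_eq_mul, Matrix.cons_val_zero, Matrix.cons_val_one,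
          Matrix.head_cons] at h0c h1c
        by_cases hv1 : v 1 = 0
        · right; exact hv1
        · left
          have hu' : u = 1 := mul_right_cancel₀ hv1 (by rw [h1c, one_mul])
          rw [hu', one_mul] at h0c
          have hmain : (ζ - 1) * v 0 = (ζ - 1) * (π ^ (-(r : ℤ)) * v 1) := by
            rw [hb] at h0c
            linear_combination -h0c
          exact ⟨hv1, mul_left_cancel₀ hζ1 hmain⟩
      · rintro (⟨hv1, hv0⟩ | hv1)
        · refine ⟨1, ?_⟩
          funext i
          fin_cases i
          · simp only [Fin.zero_eta, Pi.smul_apply, smul_eq_mul, Matrix.cons_val_zero, one_mul]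
            rw [hb]
            linear_combination (-(ζ - 1)) * hv0
          · simp only [Fin.mk_one, Pi.smul_apply, smul_eq_mul, Matrix.cons_val_one,
              Matrix.head_cons, one_mul, Matrix.cons_val_zero]
        · refine ⟨ζ, ?_⟩
          funext i
          fin_cases i
          · simp only [Fin.zero_eta, Pi.smul_apply, smul_eq_mul, Matrix.cons_val_zero]
            rw [hb]
            linear_combination ((ζ - 1) * π ^ (-(r : ℤ))) * hv1
          · simp only [Fin.mk_one, Pi.smul_apply, smul_eq_mul, Matrix.cons_val_one,
              Matrix.head_cons, Matrix.cons_val_zero]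
            linear_combination (ζ - 1) * hv1

theorem stmt9 (p n m : ℕ) [Fact p.Prime] (K : Type) [NormedField K]
    [Algebra ℚ_[p] K] [FiniteDimensional ℚ_[p] K]
    (hnorm : ∀ x : ℚ_[p], ‖algebraMap ℚ_[p] K x‖ = ‖x‖)
    (hn : 2 ≤ n) (hm : 2 ≤ m)
    (ζn ζm : K) (hζn : IsPrimitiveRoot ζn n) (hζm : IsPrimitiveRoot ζm m)
    (π : K) (hπ0 : π ≠ 0) (hπ1 : ‖π‖ < 1) (hπmax : ∀ x : K, ‖x‖ < 1 → ‖x‖ ≤ ‖π‖)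
    (r : ℕ) (hr : 1 ≤ r) :
    (orderOf (PGLmk K (matA K ζn π r (hζn.ne_zero (by omega)) hπ0)) = n ∧
      ∀ x : Projectivization K (Fin 2 → K),
        FixedPt (PGLmk K (matA K ζn π r (hζn.ne_zero (by omega)) hπ0)) x ↔
          x = Pt K 0 ∨ x = Pt K (π ^ r)) ∧
    (orderOf (PGLmk K (matB K ζm π r (hζm.ne_zero (by omega)))) = m ∧
      ∀ x : Projectivization K (Fin 2 → K),
        FixedPt (PGLmk K (matB K ζm π r (hζm.ne_zero (by omega)))) x ↔
          x = Pt K (π ^ (-(r : ℤ))) ∨ x = Pinf K) := by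
  exact ⟨partA K n hn ζn π hζn hπ0 r _, partB K m hm ζm π hζm hπ0 r _⟩
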